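/- Let η be a nonzero locally finite Borel measure on ℝ. Then the set 𝒜(η) = { (s, t) ∈ (ℝ ∖ {0}) × ℝ : there exists c > 0 with (x ↦ s·x + t)_*η = c·η } is a subgroup of the affine group of ℝ — it contains the identity (1, 0) and is closed under composition and inversion of the corresponding affine maps — and it is a closed subset of (ℝ ∖ {0}) × ℝ. -/

import Mathlib

open MeasureTheory

/-- The set of (parameters of) invertible affine maps `x ↦ s·x + t` of `ℝ` carrying the locally
finite measure `η` to a positive multiple of itself. -/
def affineQuasiStabilizer (η : Measure ℝ) : Set (ℝ × ℝ) :=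
  {p : ℝ × ℝ | p.1 ≠ 0 ∧ ∃ c : ℝ, 0 < c ∧
    Measure.map (fun x : ℝ => p.1 * x + p.2) η = ENNReal.ofReal c • η}


open Filter Topology Metric

section helpers

lemma eventually_image_subset {s t : ℝ} {sn tn : ℕ → ℝ}
    (hs : Tendsto sn atTop (𝓝 s)) (ht : Tendsto tn atTop (𝓝 t))
    {K U : Set ℝ} (hK : IsCompact K) (hU : IsOpen U)
    (hKU : (fun x : ℝ => s * x + t) '' K ⊆ U) :
    ∀ᶠ n in atTop, (fun x : ℝ => sn n * x + tn n) '' K ⊆ U := by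
  rcases K.eq_empty_or_nonempty with rfl | hne
  · simp
  obtain ⟨ε, hε, hthick⟩ := (hK.image (by fun_prop)).exists_thickening_subset_open hU hKU
  obtain ⟨M, hM⟩ := hK.isBounded.exists_norm_le
  have hM0 : (0:ℝ) ≤ M := le_trans (norm_nonneg _) (hM hne.some hne.some_mem)
  have h1 := Metric.tendsto_nhds.mp hs (ε / (2 * (M + 1))) (by positivity)
  have h2 := Metric.tendsto_nhds.mp ht (ε / 2) (by positivity)
  filter_upwards [h1, h2] with n hn1 hn2
  rw [Real.dist_eq] at hn1 hn2
  rintro _ ⟨x, hx, rfl⟩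
  apply hthick
  rw [mem_thickening_iff]
  refine ⟨s * x + t, ⟨x, hx, rfl⟩, ?_⟩
  have hxM : |x| ≤ M := hM x hx
  have hd : dist (sn n * x + tn n) (s * x + t) = |(sn n - s) * x + (tn n - t)| := by
    rw [Real.dist_eq]; ring_nf
  have hkey : ε / (2 * (M + 1)) * (M + 1) = ε / 2 := by
    field_simp
  rw [hd]
  calc |(sn n - s) * x + (tn n - t)| ≤ |sn n - s| * |x| + |tn n - t| := by
        refine le_trans (abs_add_le _ _) ?_
        rw [abs_mul]
    _ < ε / (2 * (M + 1)) * (M + 1) + ε / 2 := by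
        refine add_lt_add_of_lt_of_le ?_ hn2.le
        exact mul_lt_mul'' hn1 (hxM.trans_lt (lt_add_one M)) (abs_nonneg _) (abs_nonneg _)
    _ ≤ ε := by rw [hkey]; linarith

lemma map_affine_inv (η : Measure ℝ) {s t c : ℝ} (hs : s ≠ 0) (hc : 0 < c)
    (hm : Measure.map (fun x : ℝ => s * x + t) η = ENNReal.ofReal c • η) :
    Measure.map (fun x : ℝ => s⁻¹ * x + -(s⁻¹ * t)) η = ENNReal.ofReal c⁻¹ • η := by
  have hcomp : (fun x : ℝ => s⁻¹ * x + -(s⁻¹ * t)) ∘ (fun x : ℝ => s * x + t) = id := by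
    funext x; simp only [Function.comp_apply, id_eq]; rw [mul_add, ← mul_assoc, inv_mul_cancel₀ hs, one_mul]; ring
  have h1 : η = ENNReal.ofReal c • Measure.map (fun x : ℝ => s⁻¹ * x + -(s⁻¹ * t)) η := by
    calc η = Measure.map ((fun x : ℝ => s⁻¹ * x + -(s⁻¹ * t)) ∘
          (fun x : ℝ => s * x + t)) η := by rw [hcomp, Measure.map_id]
      _ = Measure.map (fun x : ℝ => s⁻¹ * x + -(s⁻¹ * t))
            (Measure.map (fun x : ℝ => s * x + t) η) := by
          rw [Measure.map_map (by fun_prop) (by fun_prop)]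
      _ = _ := by rw [hm, Measure.map_smul]
  calc Measure.map (fun x : ℝ => s⁻¹ * x + -(s⁻¹ * t)) η
      = (ENNReal.ofReal c⁻¹ * ENNReal.ofReal c) •
          Measure.map (fun x : ℝ => s⁻¹ * x + -(s⁻¹ * t)) η := by
        rw [← ENNReal.ofReal_mul (inv_pos.2 hc).le, inv_mul_cancel₀ hc.ne', ENNReal.ofReal_one,
          one_smul]
    _ = ENNReal.ofReal c⁻¹ • η := by rw [mul_smul, ← h1]


lemma half_ineq (η : Measure ℝ) [IsLocallyFiniteMeasure η] {s t c : ℝ} {sn tn cn : ℕ → ℝ}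
    (hs : Tendsto sn atTop (𝓝 s)) (ht : Tendsto tn atTop (𝓝 t))
    (hc : Tendsto (fun n => cn n) atTop (𝓝 c)) (hc0 : 0 < c)
    (hmap : ∀ n, Measure.map (fun x : ℝ => sn n * x + tn n) η = ENNReal.ofReal (cn n) • η)
    {U : Set ℝ} (hU : IsOpen U) :
    η ((fun x : ℝ => s * x + t) ⁻¹' U) ≤ ENNReal.ofReal c * η U := by
  rcases eq_or_ne (η U) ⊤ with hUtop | hUfin
  · rw [hUtop, ENNReal.mul_top (by simpa using hc0)]
    exact le_top
  have hpre : IsOpen ((fun x : ℝ => s * x + t) ⁻¹' U) := hU.preimage (by fun_prop)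
  rw [hpre.measure_eq_iSup_isCompact]
  refine iSup_le fun K => iSup_le fun hKsub => iSup_le fun hK => ?_
  have himg : (fun x : ℝ => s * x + t) '' K ⊆ U := Set.image_subset_iff.mpr hKsub
  have hev : ∀ᶠ n in atTop, η K ≤ ENNReal.ofReal (cn n) * η U := by
    filter_upwards [eventually_image_subset hs ht hK hU himg] with n hn
    have hsub : K ⊆ (fun x : ℝ => sn n * x + tn n) ⁻¹' U := Set.image_subset_iff.mp hn
    calc η K ≤ η ((fun x : ℝ => sn n * x + tn n) ⁻¹' U) := measure_mono hsub
      _ = ENNReal.ofReal (cn n) * η U := by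
          rw [← Measure.map_apply (by fun_prop) hU.measurableSet, hmap n,
            Measure.smul_apply, smul_eq_mul]
  refine ge_of_tendsto ?_ hev
  exact ENNReal.Tendsto.mul_const (ENNReal.tendsto_ofReal hc) (Or.inr hUfin)

end helpers


lemma aqs_one (η : Measure ℝ) : ((1, 0) : ℝ × ℝ) ∈ affineQuasiStabilizer η := by
  refine ⟨one_ne_zero, 1, one_pos, ?_⟩
  simp [Measure.map_id]

lemma aqs_mul (η : Measure ℝ) (p q : ℝ × ℝ) (hp : p ∈ affineQuasiStabilizer η)
    (hq : q ∈ affineQuasiStabilizer η) :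
    (p.1 * q.1, p.1 * q.2 + p.2) ∈ affineQuasiStabilizer η := by
  obtain ⟨hp0, cp, hcp, hmp⟩ := hp
  obtain ⟨hq0, cq, hcq, hmq⟩ := hq
  refine ⟨mul_ne_zero hp0 hq0, cp * cq, mul_pos hcp hcq, ?_⟩
  have hfg : (fun x : ℝ => (p.1 * q.1) * x + (p.1 * q.2 + p.2)) =
      (fun y : ℝ => p.1 * y + p.2) ∘ (fun x : ℝ => q.1 * x + q.2) := by
    funext x; simp [Function.comp]; ring
  rw [hfg, ← Measure.map_map (by fun_prop) (by fun_prop), hmq, Measure.map_smul, hmp,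
    smul_smul, ← ENNReal.ofReal_mul hcq.le, mul_comm cq cp]

lemma aqs_inv (η : Measure ℝ) (p : ℝ × ℝ) (hp : p ∈ affineQuasiStabilizer η) :
    (p.1⁻¹, -(p.1⁻¹ * p.2)) ∈ affineQuasiStabilizer η := by
  obtain ⟨hp0, c, hc, hm⟩ := hp
  refine ⟨inv_ne_zero hp0, c⁻¹, inv_pos.2 hc, ?_⟩
  have hcomp : (fun x : ℝ => p.1⁻¹ * x + -(p.1⁻¹ * p.2)) ∘ (fun x : ℝ => p.1 * x + p.2) = id := by
    funext x; simp only [Function.comp_apply, id_eq]; rw [mul_add, ← mul_assoc, inv_mul_cancel₀ hp0, one_mul]; ring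
  have h1 : η = ENNReal.ofReal c • Measure.map (fun x : ℝ => p.1⁻¹ * x + -(p.1⁻¹ * p.2)) η := by
    calc η = Measure.map ((fun x : ℝ => p.1⁻¹ * x + -(p.1⁻¹ * p.2)) ∘
          (fun x : ℝ => p.1 * x + p.2)) η := by rw [hcomp, Measure.map_id]
      _ = Measure.map (fun x : ℝ => p.1⁻¹ * x + -(p.1⁻¹ * p.2))
            (Measure.map (fun x : ℝ => p.1 * x + p.2) η) := by
          rw [Measure.map_map (by fun_prop) (by fun_prop)]
      _ = _ := by rw [hm, Measure.map_smul]
  calc Measure.map (fun x : ℝ => p.1⁻¹ * x + -(p.1⁻¹ * p.2)) η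
      = (ENNReal.ofReal c⁻¹ * ENNReal.ofReal c) •
          Measure.map (fun x : ℝ => p.1⁻¹ * x + -(p.1⁻¹ * p.2)) η := by
        rw [← ENNReal.ofReal_mul (inv_pos.2 hc).le, inv_mul_cancel₀ hc.ne', ENNReal.ofReal_one,
          one_smul]
    _ = ENNReal.ofReal c⁻¹ • η := by rw [mul_smul, ← h1]

lemma aqs_closed (η : Measure ℝ) [IsLocallyFiniteMeasure η] (hη : η ≠ 0) :
    IsClosed {q : {s : ℝ // s ≠ 0} × ℝ | ((q.1 : ℝ), q.2) ∈ affineQuasiStabilizer η} := by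
  apply IsSeqClosed.isClosed
  intro f q hf hlim
  set s : ℝ := (q.1 : ℝ) with hs_def
  set t : ℝ := q.2 with ht_def
  have hs0 : s ≠ 0 := q.1.2
  set sn : ℕ → ℝ := fun n => ((f n).1 : ℝ) with hsn_def
  set tn : ℕ → ℝ := fun n => (f n).2 with htn_def
  have hsn0 : ∀ n, sn n ≠ 0 := fun n => (f n).1.2
  have hs : Tendsto sn atTop (𝓝 s) :=
    ((continuous_subtype_val.comp continuous_fst).tendsto q).comp hlim
  have ht : Tendsto tn atTop (𝓝 t) := (continuous_snd.tendsto q).comp hlim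
  -- constants
  choose cn hcn hmap using fun n => (hf n).2
  -- a ball of positive finite measure
  have huniv : η Set.univ ≠ 0 := by
    simpa [Measure.measure_univ_eq_zero] using hη
  obtain ⟨n₀, hV0⟩ : ∃ n : ℕ, η (ball (0:ℝ) n) ≠ 0 := by
    by_contra h; push_neg at h
    exact huniv (by rw [← Metric.iUnion_ball_nat (0:ℝ)]; exact measure_iUnion_null fun n => h n)
  set V : Set ℝ := ball (0:ℝ) n₀ with hV_def
  have hVfin : η V ≠ ⊤ :=
    ((measure_mono ball_subset_closedBall).trans_lt
      (isCompact_closedBall (0:ℝ) n₀).measure_lt_top).ne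
  have hVK : IsCompact (closedBall (0:ℝ) (n₀:ℝ)) := isCompact_closedBall _ _
  -- bounded open set containing ψ(V̄)
  obtain ⟨R₁, hR₁⟩ := ((hVK.image (by fun_prop : Continuous fun x : ℝ => s * x + t)).isBounded).subset_ball (0:ℝ)
  have hU₁fin : η (ball (0:ℝ) R₁) ≠ ⊤ :=
    ((measure_mono ball_subset_closedBall).trans_lt
      (isCompact_closedBall (0:ℝ) R₁).measure_lt_top).ne
  -- bounded open set containing χ(V̄)
  obtain ⟨R₂, hR₂⟩ := ((hVK.image (by fun_prop : Continuous fun x : ℝ => s⁻¹ * x + -(s⁻¹ * t))).isBounded).subset_ball (0:ℝ)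
  have hU₂fin : η (ball (0:ℝ) R₂) ≠ ⊤ :=
    ((measure_mono ball_subset_closedBall).trans_lt
      (isCompact_closedBall (0:ℝ) R₂).measure_lt_top).ne
  have hsinv : Tendsto (fun n => (sn n)⁻¹) atTop (𝓝 s⁻¹) := hs.inv₀ hs0
  have htinv : Tendsto (fun n => -((sn n)⁻¹ * tn n)) atTop (𝓝 (-(s⁻¹ * t))) :=
    (hsinv.mul ht).neg
  -- eventual bounds
  have hev₁ : ∀ᶠ n in atTop, η V ≤ ENNReal.ofReal (cn n) * η (ball (0:ℝ) R₁) := by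
    filter_upwards [eventually_image_subset hs ht hVK isOpen_ball hR₁] with n hn
    have hsub : V ⊆ (fun x : ℝ => sn n * x + tn n) ⁻¹' ball (0:ℝ) R₁ :=
      ball_subset_closedBall.trans (Set.image_subset_iff.mp hn)
    calc η V ≤ η ((fun x : ℝ => sn n * x + tn n) ⁻¹' ball (0:ℝ) R₁) := measure_mono hsub
      _ = _ := by
        rw [← Measure.map_apply (by fun_prop) measurableSet_ball, hmap n,
          Measure.smul_apply, smul_eq_mul]
  have hev₂ : ∀ᶠ n in atTop, ENNReal.ofReal (cn n) * η V ≤ η (ball (0:ℝ) R₂) := by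
    have hinvmaps : ∀ n, ((fun x : ℝ => (sn n)⁻¹ * x + -((sn n)⁻¹ * tn n)) '' (closedBall 0 n₀) ⊆ ball (0:ℝ) R₂) → ENNReal.ofReal (cn n) * η V ≤ η (ball (0:ℝ) R₂) := by
      intro n hn
      have hsub : (fun x : ℝ => sn n * x + tn n) ⁻¹' V ⊆ ball (0:ℝ) R₂ := by
        intro x hx
        have : x = (sn n)⁻¹ * (sn n * x + tn n) + -((sn n)⁻¹ * tn n) := by
          rw [mul_add, ← mul_assoc, inv_mul_cancel₀ (hsn0 n), one_mul]; ring
        rw [this]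
        exact hn ⟨_, ball_subset_closedBall hx, rfl⟩
      calc ENNReal.ofReal (cn n) * η V
          = η ((fun x : ℝ => sn n * x + tn n) ⁻¹' V) := by
            rw [← Measure.map_apply (by fun_prop) measurableSet_ball, hmap n,
              Measure.smul_apply, smul_eq_mul]
        _ ≤ _ := measure_mono hsub
    filter_upwards [eventually_image_subset hsinv htinv hVK isOpen_ball hR₂] with n hn
    exact hinvmaps n hn
  -- extract convergent subsequence of (ofReal ∘ cn) in the compact space ℝ≥0∞
  obtain ⟨L, -, φ, hφ, hLtend⟩ := (isCompact_univ (X := ENNReal)).tendsto_subseq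
    (x := fun n => ENNReal.ofReal (cn n)) (fun n => Set.mem_univ _)
  have hφtop : Tendsto φ atTop atTop := hφ.tendsto_atTop
  have hLlow : η V ≤ L * η (ball (0:ℝ) R₁) :=
    ge_of_tendsto (ENNReal.Tendsto.mul_const hLtend (Or.inr hU₁fin))
      (hφtop.eventually hev₁)
  have hLup : L * η V ≤ η (ball (0:ℝ) R₂) :=
    le_of_tendsto (ENNReal.Tendsto.mul_const hLtend (Or.inr hVfin))
      (hφtop.eventually hev₂)
  have hL0 : L ≠ 0 := by
    rintro rfl
    rw [zero_mul] at hLlow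
    exact hV0 (le_antisymm hLlow zero_le)
  have hLtop : L ≠ ⊤ := by
    rintro rfl
    rw [ENNReal.top_mul hV0] at hLup
    exact hU₂fin (le_antisymm le_top hLup)
  set c : ℝ := L.toReal with hc_def
  have hc0 : 0 < c := ENNReal.toReal_pos hL0 hLtop
  have hctend : Tendsto (fun k => cn (φ k)) atTop (𝓝 c) := by
    have h1 : Tendsto (fun k => (ENNReal.ofReal (cn (φ k))).toReal) atTop (𝓝 c) :=
      (ENNReal.tendsto_toReal hLtop).comp hLtend
    refine h1.congr fun k => ?_
    exact ENNReal.toReal_ofReal (hcn (φ k)).le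
  -- the two half inequalities
  have hA1 : ∀ U : Set ℝ, IsOpen U →
      η ((fun x : ℝ => s * x + t) ⁻¹' U) ≤ ENNReal.ofReal c * η U :=
    fun U hU => half_ineq η (hs.comp hφtop) (ht.comp hφtop) hctend hc0
      (fun k => hmap (φ k)) hU
  have hA2 : ∀ U : Set ℝ, IsOpen U →
      η ((fun x : ℝ => s⁻¹ * x + -(s⁻¹ * t)) ⁻¹' U) ≤ ENNReal.ofReal c⁻¹ * η U :=
    fun U hU => half_ineq η (hsinv.comp hφtop) (htinv.comp hφtop)
      ((hctend.inv₀ hc0.ne')) (inv_pos.2 hc0)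
      (fun k => map_affine_inv η (hsn0 (φ k)) (hcn (φ k)) (hmap (φ k))) hU
  -- equality on open sets
  have hopen : ∀ U : Set ℝ, IsOpen U →
      η ((fun x : ℝ => s * x + t) ⁻¹' U) = ENNReal.ofReal c * η U := by
    intro U hU
    refine le_antisymm (hA1 U hU) ?_
    have hpre : IsOpen ((fun x : ℝ => s * x + t) ⁻¹' U) := hU.preimage (by fun_prop)
    have h2 := hA2 _ hpre
    have hid : (fun x : ℝ => s⁻¹ * x + -(s⁻¹ * t)) ⁻¹' ((fun x : ℝ => s * x + t) ⁻¹' U) = U := by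
      ext x
      simp only [Set.mem_preimage]
      have : s * (s⁻¹ * x + -(s⁻¹ * t)) + t = x := by field_simp; ring
      rw [this]
    rw [hid] at h2
    calc ENNReal.ofReal c * η U
        ≤ ENNReal.ofReal c * (ENNReal.ofReal c⁻¹ * η ((fun x : ℝ => s * x + t) ⁻¹' U)) :=
          mul_le_mul_right h2 _
      _ = η ((fun x : ℝ => s * x + t) ⁻¹' U) := by
          rw [← mul_assoc, ← ENNReal.ofReal_mul hc0.le, mul_inv_cancel₀ hc0.ne',
            ENNReal.ofReal_one, one_mul]
  -- conclude measure equality via outer regularity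
  refine ⟨hs0, c, hc0, ?_⟩
  have hreg : (Measure.map (fun x : ℝ => s * x + t) η).Regular := by
    have h : (fun x : ℝ => s * x + t) = ⇑((Homeomorph.mulLeft₀ s hs0).trans
        (Homeomorph.addRight t)) := rfl
    rw [h]; exact Measure.Regular.map _
  have hreg2 : (ENNReal.ofReal c • η).Regular := Measure.Regular.smul ENNReal.ofReal_ne_top
  ext A hA
  rw [Set.measure_eq_iInf_isOpen A, Set.measure_eq_iInf_isOpen A]
  refine iInf_congr fun U => iInf_congr fun hAU => iInf_congr fun hU => ?_
  rw [Measure.map_apply (by fun_prop) hU.measurableSet, hopen U hU,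
    Measure.smul_apply, smul_eq_mul]


/-- For a nonzero locally finite Borel measure `η` on `ℝ`, the set
`𝒜(η) = {(s, t) : s ≠ 0, ∃ c > 0, (x ↦ s·x + t)_* η = c·η}` contains the identity `(1, 0)`,
is closed under composition `(s,t)·(s',t') = (s s', s t' + t)` and inversion
`(s,t)⁻¹ = (s⁻¹, −s⁻¹ t)` of the corresponding affine maps, and is a closed subset of
`(ℝ ∖ {0}) × ℝ`. -/
theorem affineQuasiStabilizer_subgroup_and_closed
    (η : Measure ℝ) [IsLocallyFiniteMeasure η] (hη : η ≠ 0) :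
    ((1, 0) : ℝ × ℝ) ∈ affineQuasiStabilizer η ∧
    (∀ p q : ℝ × ℝ, p ∈ affineQuasiStabilizer η → q ∈ affineQuasiStabilizer η →
      (p.1 * q.1, p.1 * q.2 + p.2) ∈ affineQuasiStabilizer η) ∧
    (∀ p : ℝ × ℝ, p ∈ affineQuasiStabilizer η →
      (p.1⁻¹, -(p.1⁻¹ * p.2)) ∈ affineQuasiStabilizer η) ∧
    IsClosed {q : {s : ℝ // s ≠ 0} × ℝ | ((q.1 : ℝ), q.2) ∈ affineQuasiStabilizer η} := by
  exact ⟨aqs_one η, aqs_mul η, aqs_inv η, aqs_closed η hη⟩
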